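/- Let π be a group, A = Q[π] with augmentation ideal I, and suppose κ̃ : π × π → A ⊗ A satisfies κ̃(α, x) = κ̃(α − 1, x − 1) lies in filtration degree k − 1 of A ⊗ A whenever α ∈ Γ_k π (i.e., κ̃(α,x) ∈ ∑_{p+q = k−1} I^p ⊗ I^q). Let γ ∈ Γ_k π (k ≥ 2), δ ∈ Γ_{k+2}π, γ_1 = γδ, and assume the product formula κ̃(αβ,x) = κ̃(α,x) + κ̃(β,x) ⋄ (α^{-1} ⊗ α). Then κ̃(γ_1, x) ⋄ (γ_1 − 1) ≡ κ̃(γ, x) ⋄ (γ − 1) modulo I^{2k+1}, where (a'⊗a'') ⋄ c := a' c a'' ∈ A for c ∈ A. -/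

import Mathlib

open TensorProduct

/-- The augmentation ideal of the rational group algebra `ℚ[π]`. -/
noncomputable def augIdeal (π : Type*) [Group π] : Ideal (MonoidAlgebra ℚ π) :=
  RingHom.ker ((MonoidAlgebra.lift ℚ ℚ π) 1)

/-- The `m`-th term `∑_{p+q=m} I^p ⊗ I^q` of the filtration of `A ⊗ A` induced by
the powers of the augmentation ideal `I` of `A = ℚ[π]`. -/
noncomputable def tensorFil (π : Type*) [Group π] (m : ℕ) :
    Submodule ℚ (MonoidAlgebra ℚ π ⊗[ℚ] MonoidAlgebra ℚ π) :=
  Submodule.span ℚ {z | ∃ p q : ℕ, p + q = m ∧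
    ∃ a ∈ (augIdeal π) ^ p, ∃ b ∈ (augIdeal π) ^ q, z = a ⊗ₜ b}

section Aux

variable (π : Type*) [Group π]

lemma augIdeal_mul_mem_right {b : MonoidAlgebra ℚ π} (hb : b ∈ augIdeal π)
    (r : MonoidAlgebra ℚ π) : b * r ∈ augIdeal π := by
  rw [augIdeal, RingHom.mem_ker] at hb ⊢
  rw [map_mul, hb, zero_mul]

lemma augIdeal_pow_mul_mem_right {n : ℕ} {x : MonoidAlgebra ℚ π}
    (hx : x ∈ (augIdeal π) ^ n) (r : MonoidAlgebra ℚ π) :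
    x * r ∈ (augIdeal π) ^ n := by
  induction n generalizing x with
  | zero => rw [Submodule.pow_zero, Ideal.one_eq_top]; trivial
  | succ n ih =>
    rw [Submodule.pow_succ] at hx ⊢
    refine Submodule.mul_induction_on hx (fun a ha b hb => ?_) (fun y z hy hz => ?_)
    · rw [mul_assoc]
      exact Submodule.mul_mem_mul ha (augIdeal_mul_mem_right π hb r)
    · rw [add_mul]; exact add_mem hy hz

lemma augIdeal_mul_pow_mem {p q : ℕ} {a b : MonoidAlgebra ℚ π}
    (ha : a ∈ (augIdeal π) ^ p) (hb : b ∈ (augIdeal π) ^ q) :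
    a * b ∈ (augIdeal π) ^ (p + q) := by
  induction q generalizing b with
  | zero => exact augIdeal_pow_mul_mem_right π ha b
  | succ q ih =>
    rw [Submodule.pow_succ] at hb
    rw [show p + (q + 1) = (p + q) + 1 from rfl, Submodule.pow_succ]
    refine Submodule.mul_induction_on hb (fun c hc d hd => ?_) (fun y z hy hz => ?_)
    · rw [← mul_assoc]
      exact Submodule.mul_mem_mul (ih hc) hd
    · rw [mul_add]; exact add_mem hy hz

lemma augIdeal_pow_smul_mem {n : ℕ} (q : ℚ) {x : MonoidAlgebra ℚ π}
    (hx : x ∈ (augIdeal π) ^ n) : q • x ∈ (augIdeal π) ^ n := by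
  rw [Algebra.smul_def]
  exact Ideal.mul_mem_left _ _ hx

lemma of_sub_one_mem_augIdeal (g : π) :
    MonoidAlgebra.of ℚ π g - 1 ∈ augIdeal π := by
  rw [augIdeal, RingHom.mem_ker, map_sub]
  simp

/-- The subgroup of elements `g` with `g - 1 ∈ I^n`. -/
noncomputable def augSubgroup (n : ℕ) : Subgroup π where
  carrier := {g | MonoidAlgebra.of ℚ π g - 1 ∈ (augIdeal π) ^ n}
  one_mem' := by
    simp only [Set.mem_setOf_eq, map_one, sub_self]
    exact zero_mem _
  mul_mem' := by
    intro a b ha hb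
    have h : MonoidAlgebra.of ℚ π (a * b) - 1
        = MonoidAlgebra.of ℚ π a * (MonoidAlgebra.of ℚ π b - 1)
          + (MonoidAlgebra.of ℚ π a - 1) := by
      rw [map_mul]; noncomm_ring
    rw [Set.mem_setOf_eq, h]
    exact add_mem (Ideal.mul_mem_left _ _ hb) ha
  inv_mem' := by
    intro a ha
    have h1 : MonoidAlgebra.of ℚ π a⁻¹ * MonoidAlgebra.of ℚ π a = 1 := by
      rw [← map_mul, inv_mul_cancel, map_one]
    have h : MonoidAlgebra.of ℚ π a⁻¹ - 1
        = -(MonoidAlgebra.of ℚ π a⁻¹ * (MonoidAlgebra.of ℚ π a - 1)) := by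
      rw [mul_sub, h1]; noncomm_ring
    rw [Set.mem_setOf_eq, h]
    exact neg_mem (Ideal.mul_mem_left _ _ ha)

lemma sub_one_mem_pow {n : ℕ} {g : π} (hg : g ∈ (⊤ : Subgroup π).lowerCentralSeries n) :
    MonoidAlgebra.of ℚ π g - 1 ∈ (augIdeal π) ^ (n + 1) := by
  induction n generalizing g with
  | zero => rw [zero_add, Submodule.pow_one]; exact of_sub_one_mem_augIdeal π g
  | succ n ih =>
    rw [Subgroup.lowerCentralSeries_succ] at hg
    have hle : Subgroup.closure {x | ∃ p ∈ (⊤ : Subgroup π).lowerCentralSeries n, ∃ q ∈ (⊤ : Subgroup π),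
        p * q * p⁻¹ * q⁻¹ = x} ≤ augSubgroup π (n + 2) := by
      rw [Subgroup.closure_le]
      rintro x ⟨p, hp, q, -, rfl⟩
      have hP := ih hp
      have hQ : MonoidAlgebra.of ℚ π q - 1 ∈ (augIdeal π) ^ 1 := by
        rw [Submodule.pow_one]; exact of_sub_one_mem_augIdeal π q
      set P := MonoidAlgebra.of ℚ π p with hPdef
      set Q := MonoidAlgebra.of ℚ π q with hQdef
      have hPP : P * MonoidAlgebra.of ℚ π p⁻¹ = 1 := by
        rw [hPdef, ← map_mul, mul_inv_cancel, map_one]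
      have hQQ : Q * MonoidAlgebra.of ℚ π q⁻¹ = 1 := by
        rw [hQdef, ← map_mul, mul_inv_cancel, map_one]
      have hcomm : P * Q - Q * P = (P - 1) * (Q - 1) - (Q - 1) * (P - 1) := by noncomm_ring
      have hmem : P * Q - Q * P ∈ (augIdeal π) ^ (n + 2) := by
        rw [hcomm]
        refine sub_mem ?_ ?_
        · have := augIdeal_mul_pow_mem π hP hQ
          rwa [show (n + 1) + 1 = n + 2 by omega] at this
        have := augIdeal_mul_pow_mem π hQ hP
        rwa [show 1 + (n + 1) = n + 2 by omega] at this
      have hx : MonoidAlgebra.of ℚ π (p * q * p⁻¹ * q⁻¹) - 1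
          = (P * Q - Q * P) * MonoidAlgebra.of ℚ π p⁻¹ * MonoidAlgebra.of ℚ π q⁻¹ := by
        simp only [map_mul, ← hPdef, ← hQdef]
        have h1 : Q * P * MonoidAlgebra.of ℚ π p⁻¹ * MonoidAlgebra.of ℚ π q⁻¹ = 1 := by
          rw [mul_assoc Q P, hPP, mul_one, hQQ]
        rw [sub_mul, sub_mul, h1]
      show MonoidAlgebra.of ℚ π (p * q * p⁻¹ * q⁻¹) - 1 ∈ (augIdeal π) ^ (n + 2)
      rw [hx]
      exact augIdeal_pow_mul_mem_right π (augIdeal_pow_mul_mem_right π hmem _) _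
    exact hle hg

end Aux

section Aux2


variable {π : Type*} [Group π]

lemma e_fil (e : (MonoidAlgebra ℚ π ⊗[ℚ] MonoidAlgebra ℚ π) →ₗ[ℚ]
      MonoidAlgebra ℚ π →ₗ[ℚ] MonoidAlgebra ℚ π)
    (he : ∀ a' a'' c : MonoidAlgebra ℚ π, e (a' ⊗ₜ a'') c = a' * c * a'')
    {n p : ℕ} {z : MonoidAlgebra ℚ π ⊗[ℚ] MonoidAlgebra ℚ π}
    (hz : z ∈ tensorFil π n) {c : MonoidAlgebra ℚ π}
    (hc : c ∈ (augIdeal π) ^ p) :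
    e z c ∈ (augIdeal π) ^ (n + p) := by
  refine Submodule.span_induction (p := fun z _ => e z c ∈ (augIdeal π) ^ (n + p))
    ?_ ?_ ?_ ?_ hz
  · rintro w ⟨p', q', hpq, a, ha, b, hb, rfl⟩
    rw [he]
    have h1 := augIdeal_mul_pow_mem π ha hc
    have h2 := augIdeal_mul_pow_mem π h1 hb
    rwa [show p' + p + q' = n + p by omega] at h2
  · show (e 0) c ∈ (augIdeal π) ^ (n + p)
    rw [map_zero, LinearMap.zero_apply]; exact zero_mem _
  · intro u v _ _ hu hv
    rw [map_add, LinearMap.add_apply]; exact add_mem hu hv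
  · intro q w _ hw
    rw [map_smul, LinearMap.smul_apply]
    exact augIdeal_pow_smul_mem π q hw

end Aux2

/-- suppose `κ̃ : π × π → A ⊗ A` satisfies the product formula
`κ̃(αβ,x) = κ̃(α,x) + κ̃(β,x) ⋄ (α⁻¹ ⊗ α)` and lies in filtration degree `m − 1`
of `A ⊗ A` whenever its first argument is in `Γ_m π` (here stated as: first
argument in `Γ_{m+1}π = (⊤ : Subgroup π).lowerCentralSeries m` gives filtration degree `m`).
Let `γ ∈ Γ_k π` (`k ≥ 2`), `δ ∈ Γ_{k+2}π` and `γ₁ = γδ`.  Then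
`κ̃(γ₁, x) ⋄ (γ₁ − 1) ≡ κ̃(γ, x) ⋄ (γ − 1) mod I^{2k+1}`, where
`(a'⊗a'') ⋄ c = a'ca''` is the evaluation map `e`. -/
theorem stmt18 (π : Type*) [Group π]
    (m : (MonoidAlgebra ℚ π ⊗[ℚ] MonoidAlgebra ℚ π) →ₗ[ℚ]
      (MonoidAlgebra ℚ π ⊗[ℚ] MonoidAlgebra ℚ π) →ₗ[ℚ]
      (MonoidAlgebra ℚ π ⊗[ℚ] MonoidAlgebra ℚ π))
    (hm : ∀ a' a'' b' b'' : MonoidAlgebra ℚ π,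
      m (a' ⊗ₜ a'') (b' ⊗ₜ b'') = (a' * b') ⊗ₜ (b'' * a''))
    (e : (MonoidAlgebra ℚ π ⊗[ℚ] MonoidAlgebra ℚ π) →ₗ[ℚ]
      MonoidAlgebra ℚ π →ₗ[ℚ] MonoidAlgebra ℚ π)
    (he : ∀ a' a'' c : MonoidAlgebra ℚ π, e (a' ⊗ₜ a'') c = a' * c * a'')
    (kt : π → π → MonoidAlgebra ℚ π ⊗[ℚ] MonoidAlgebra ℚ π)
    (hprod : ∀ α β x : π, kt (α * β) x =
      kt α x + m (kt β x) (MonoidAlgebra.of ℚ π α⁻¹ ⊗ₜ MonoidAlgebra.of ℚ π α))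
    (hfil : ∀ (n : ℕ) (α x : π), α ∈ (⊤ : Subgroup π).lowerCentralSeries n →
      kt α x ∈ tensorFil π n)
    (k : ℕ) (hk : 2 ≤ k) (γ δ : π)
    (hγ : γ ∈ (⊤ : Subgroup π).lowerCentralSeries (k - 1))
    (hδ : δ ∈ (⊤ : Subgroup π).lowerCentralSeries (k + 1))
    (x : π) :
    e (kt (γ * δ) x) (MonoidAlgebra.of ℚ π (γ * δ) - 1)
      - e (kt γ x) (MonoidAlgebra.of ℚ π γ - 1)
      ∈ (augIdeal π) ^ (2 * k + 1) := by
  set A := MonoidAlgebra ℚ π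
  set of : π →* A := MonoidAlgebra.of ℚ π with hof
  -- evaluation of `m z (u ⊗ₜ v)` against `c`
  have key : ∀ (z : A ⊗[ℚ] A) (u v c : A), e (m z (u ⊗ₜ v)) c = e z (u * c * v) := by
    intro z u v c
    induction z using TensorProduct.induction_on with
    | zero => simp only [map_zero, LinearMap.zero_apply]
    | tmul a b =>
      rw [hm, he, he]
      simp only [mul_assoc]
    | add u' v' hu hv =>
      rw [map_add, LinearMap.add_apply, map_add, LinearMap.add_apply,
        map_add, LinearMap.add_apply, hu, hv]
  -- expand the product formula
  have hexp : e (kt (γ * δ) x) (of (γ * δ) - 1)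
      = e (kt γ x) (of (γ * δ) - 1) + e (kt δ x) (of γ⁻¹ * (of (γ * δ) - 1) * of γ) := by
    rw [hprod γ δ x, map_add, LinearMap.add_apply, key]
  -- simplify the conjugated argument
  have hconj : of γ⁻¹ * (of (γ * δ) - 1) * of γ = of (δ * γ) - 1 := by
    have h1 : of γ⁻¹ * of (γ * δ) * of γ = of (δ * γ) := by
      rw [← map_mul, ← map_mul]
      congr 1
      group
    have h2 : of γ⁻¹ * 1 * of γ = 1 := by
      rw [mul_one, ← map_mul, inv_mul_cancel, map_one]
    rw [mul_sub, sub_mul, h1, h2]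
  have hsplit : e (kt (γ * δ) x) (of (γ * δ) - 1) - e (kt γ x) (of γ - 1)
      = e (kt γ x) ((of (γ * δ) - 1) - (of γ - 1)) + e (kt δ x) (of (δ * γ) - 1) := by
    rw [hexp, hconj]
    simp only [map_sub]
    abel
  rw [hsplit]
  -- first summand
  have hγδ1 : (of (γ * δ) - 1) - (of γ - 1) = of γ * (of δ - 1) := by
    rw [map_mul, mul_sub, mul_one]
    abel
  have hδ1 : of δ - 1 ∈ (augIdeal π) ^ (k + 2) := sub_one_mem_pow π hδ
  have hterm1 : e (kt γ x) ((of (γ * δ) - 1) - (of γ - 1)) ∈ (augIdeal π) ^ (2 * k + 1) := by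
    rw [hγδ1]
    have hmem := e_fil e he (hfil (k - 1) γ x hγ) (Ideal.mul_mem_left _ (of γ) hδ1)
    rwa [show (k - 1) + (k + 2) = 2 * k + 1 by omega] at hmem
  -- second summand
  have hδγ : δ * γ ∈ (⊤ : Subgroup π).lowerCentralSeries (k - 1) := by
    refine mul_mem (Subgroup.lowerCentralSeries_antitone ⊤ ?_ hδ) hγ
    omega
  have hδγ1 : of (δ * γ) - 1 ∈ (augIdeal π) ^ k := by
    have := sub_one_mem_pow π hδγ
    rwa [show (k - 1) + 1 = k by omega] at this
  have hterm2 : e (kt δ x) (of (δ * γ) - 1) ∈ (augIdeal π) ^ (2 * k + 1) := by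
    have hmem := e_fil e he (hfil (k + 1) δ x hδ) hδγ1
    rwa [show (k + 1) + k = 2 * k + 1 by omega] at hmem
  exact add_mem hterm1 hterm2
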